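/- If PSL(2,7) acts transitively on a finite set Σ with |Σ| ≤ 41, then |Σ| ∈ {1, 7, 8, 14, 21, 24, 28}. -/

import Mathlib

set_option maxRecDepth 40000

/-- `SL(2,7)`, the special linear group of `2 × 2` matrices over `𝔽₇`. -/
abbrev SL27 : Type := Matrix.SpecialLinearGroup (Fin 2) (ZMod 7)

/-- `PSL(2,7)`, the projective special linear group, a simple group of order `168`. -/
abbrev PSL27 : Type := SL27 ⧸ Subgroup.center SL27

instance : DecidableEq SL27 := fun a b => decidable_of_iff (a.1 = b.1) Subtype.ext_iff.symm

instance : Fact (Nat.Prime 7) := ⟨by norm_num⟩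

noncomputable instance : Fintype PSL27 := Fintype.ofFinite _

/-- The upper unitriangular generator. -/
def uu : SL27 := ⟨!![1,1;0,1], by decide⟩
/-- The lower unitriangular generator. -/
def ll : SL27 := ⟨!![1,0;1,1], by decide⟩
/-- Minus the identity. -/
def negOne : SL27 := ⟨!![6,0;0,6], by decide⟩

lemma mem_center_iff' (x : SL27) :
    x ∈ Subgroup.center SL27 ↔ x = 1 ∨ x = negOne := by
  rw [Matrix.SpecialLinearGroup.mem_center_iff]
  constructor
  · rintro ⟨r, hr, hrx⟩
    have h2 : r = 1 ∨ r = -1 := by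
      have : ∀ r : ZMod 7, r ^ 2 = 1 → r = 1 ∨ r = -1 := by decide
      exact this r (by simpa using hr)
    rcases h2 with rfl | rfl
    · left
      ext i j
      rw [← hrx]
      fin_cases i <;> fin_cases j <;> rfl
    · right
      ext i j
      rw [← hrx]
      fin_cases i <;> fin_cases j <;> rfl
  · rintro (rfl | rfl)
    · exact ⟨1, by decide, by decide⟩
    · exact ⟨-1, by decide, by decide⟩

lemma card_SL : Nat.card SL27 = 336 := by
  rw [Nat.card_eq_fintype_card]; decide

lemma center_eq : Subgroup.center SL27 = Subgroup.zpowers negOne := by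
  apply le_antisymm
  · intro x hx
    rcases (mem_center_iff' x).mp hx with rfl | rfl
    · exact Subgroup.one_mem _
    · exact Subgroup.mem_zpowers _
  · rw [Subgroup.zpowers_le]
    exact (mem_center_iff' negOne).mpr (Or.inr rfl)

lemma orderOf_negOne : orderOf negOne = 2 :=
  orderOf_eq_prime (by decide) (by decide)

lemma card_center : Nat.card (Subgroup.center SL27) = 2 := by
  rw [center_eq, Nat.card_zpowers, orderOf_negOne]

lemma card_PSL : Nat.card PSL27 = 168 := by
  have h := Subgroup.card_eq_card_quotient_mul_card_subgroup (Subgroup.center SL27)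
  rw [card_SL, card_center] at h
  show Nat.card (SL27 ⧸ Subgroup.center SL27) = 168
  omega
/-- The projection `SL27 →* PSL27`. -/
def prj : SL27 →* PSL27 := QuotientGroup.mk' (Subgroup.center SL27)

lemma prj_eq_prj {a b : SL27} : prj a = prj b ↔ b = a ∨ b = a * negOne := by
  rw [show prj = QuotientGroup.mk' (Subgroup.center SL27) from rfl, QuotientGroup.mk'_eq_mk']
  constructor
  · rintro ⟨z, hz, rfl⟩
    rcases (mem_center_iff' z).mp hz with rfl | rfl
    · left; rw [mul_one]
    · right; rfl
  · rintro (rfl | rfl)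
    · exact ⟨1, Subgroup.one_mem _, mul_one _⟩
    · exact ⟨negOne, (mem_center_iff' negOne).mpr (Or.inr rfl), rfl⟩

lemma prj_eq_one {a : SL27} : prj a = 1 ↔ a = 1 ∨ a = negOne := by
  have := @prj_eq_prj 1 a
  rw [map_one] at this
  rw [eq_comm, this, one_mul]

lemma orderOf_prj_uu : orderOf (prj uu) = 7 := by
  refine orderOf_eq_prime ?_ ?_
  · rw [← map_pow, show uu ^ 7 = 1 by decide, map_one]
  · intro h
    rcases prj_eq_one.mp h with h' | h' <;> revert h' <;> decide

lemma orderOf_prj_ll : orderOf (prj ll) = 7 := by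
  refine orderOf_eq_prime ?_ ?_
  · rw [← map_pow, show ll ^ 7 = 1 by decide, map_one]
  · intro h
    rcases prj_eq_one.mp h with h' | h' <;> revert h' <;> decide

instance : Fact (Nat.Prime 3) := ⟨by norm_num⟩

lemma orderOf_prj_w : orderOf (prj (uu * ll ^ 4)) = 3 := by
  refine orderOf_eq_prime ?_ ?_
  · rw [← map_pow, show (uu * ll ^ 4) ^ 3 = 1 by decide, map_one]
  · intro h
    rcases prj_eq_one.mp h with h' | h' <;> revert h' <;> decide

lemma prj_ll_not_mem : prj ll ∉ Subgroup.zpowers (prj uu) := by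
  intro hmem
  rw [← mem_powers_iff_mem_zpowers] at hmem
  obtain ⟨n, hn'⟩ := hmem
  have hn : prj uu ^ n = prj ll := hn'
  rw [← pow_mod_orderOf, orderOf_prj_uu] at hn
  have hlt : n % 7 < 7 := Nat.mod_lt _ (by norm_num)
  rw [← map_pow] at hn
  have := prj_eq_prj.mp hn
  have hkey : ∀ m : ℕ, m < 7 → ll ≠ uu ^ m ∧ ll ≠ uu ^ m * negOne := by decide
  rcases this with h' | h'
  · exact (hkey _ hlt).1 h'
  · exact (hkey _ hlt).2 h'

/-- Build a Sylow 7-subgroup from a subgroup of order `7` in a group of order dividing 168. -/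
lemma sylow_of_card7 {Γ : Type*} [Group Γ] [Finite Γ] (hΓ : Nat.card Γ ∣ 168)
    (S : Subgroup Γ) (hcard : Nat.card S = 7) :
    ∃ P : Sylow 7 Γ, (P : Subgroup Γ) = S := by
  have hp : IsPGroup 7 S := IsPGroup.of_card (n := 1) (by rw [hcard, pow_one])
  have hidx : ¬ (7 ∣ S.index) := by
    intro hdvd
    have hmul := Subgroup.card_mul_index S
    rw [hcard] at hmul
    have h49 : 49 ∣ Nat.card Γ := by
      obtain ⟨c, hc⟩ := hdvd
      exact ⟨c, by omega⟩
    have : (49 : ℕ) ∣ 168 := h49.trans hΓ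
    norm_num at this
  exact ⟨hp.toSylow hidx, rfl⟩

/-- Build a Sylow 7-subgroup from an element of order 7 in a group of order dividing 168. -/
lemma sylow_of_orderOf_eq {Γ : Type*} [Group Γ] [Finite Γ] (hΓ : Nat.card Γ ∣ 168)
    (g : Γ) (hg : orderOf g = 7) :
    ∃ P : Sylow 7 Γ, (P : Subgroup Γ) = Subgroup.zpowers g :=
  sylow_of_card7 hΓ _ (by rw [Nat.card_zpowers, hg])

lemma card_sylow7_PSL : Nat.card (Sylow 7 PSL27) = 8 := by
  obtain ⟨Pu, hPu⟩ := sylow_of_orderOf_eq (by rw [card_PSL]) _ orderOf_prj_uu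
  obtain ⟨Pl, hPl⟩ := sylow_of_orderOf_eq (by rw [card_PSL]) _ orderOf_prj_ll
  have hne : Pu ≠ Pl := by
    intro h
    apply prj_ll_not_mem
    rw [← hPu, h, hPl]
    exact Subgroup.mem_zpowers _
  have hmod := card_sylow_modEq_one 7 PSL27
  have hdvd := Sylow.card_dvd_index Pu
  rw [hPu] at hdvd
  have hidx : (Subgroup.zpowers (prj uu)).index = 24 := by
    have hmul := Subgroup.card_mul_index (Subgroup.zpowers (prj uu))
    rw [Nat.card_zpowers, orderOf_prj_uu, card_PSL] at hmul
    omega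
  rw [hidx] at hdvd
  have hmod' : Nat.card (Sylow 7 PSL27) % 7 = 1 := hmod
  have : Nat.card (Sylow 7 PSL27) = 1 ∨ Nat.card (Sylow 7 PSL27) = 8 := by
    have hle : Nat.card (Sylow 7 PSL27) ≤ 24 := Nat.le_of_dvd (by norm_num) hdvd
    interval_cases h : Nat.card (Sylow 7 PSL27) <;> omega
  rcases this with h1 | h8
  · exfalso
    obtain ⟨hsub, -⟩ := Nat.card_eq_one_iff_unique.mp h1
    exact hne (hsub.elim Pu Pl)
  · exact h8
lemma card_normalizer (P : Sylow 7 PSL27) : Nat.card (Subgroup.normalizer ((P : Subgroup PSL27) : Set PSL27)) = 21 := by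
  have h := Sylow.card_eq_index_normalizer P
  rw [card_sylow7_PSL] at h
  have hmul := Subgroup.card_mul_index (Subgroup.normalizer ((P : Subgroup PSL27) : Set PSL27))
  change 8 = (Subgroup.normalizer ((P : Subgroup PSL27) : Set PSL27)).index at h
  rw [card_PSL, ← h] at hmul
  omega

lemma eq_top_of_uu_ll_mem (K : Subgroup PSL27) (hu : prj uu ∈ K) (hl : prj ll ∈ K) :
    K = ⊤ := by
  have hKdvd : Nat.card K ∣ 168 := by
    have := Subgroup.card_subgroup_dvd_card K
    rwa [card_PSL] at this
  -- order 7 element in K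
  have hordu : orderOf (⟨prj uu, hu⟩ : K) = 7 := by
    rw [← orderOf_injective K.subtype (Subgroup.subtype_injective K) ⟨prj uu, hu⟩]
    exact orderOf_prj_uu
  have hordl : orderOf (⟨prj ll, hl⟩ : K) = 7 := by
    rw [← orderOf_injective K.subtype (Subgroup.subtype_injective K) ⟨prj ll, hl⟩]
    exact orderOf_prj_ll
  have h7 : 7 ∣ Nat.card K := by
    have := orderOf_dvd_natCard (⟨prj uu, hu⟩ : K)
    rwa [hordu] at this
  have hw : prj (uu * ll ^ 4) ∈ K := by
    rw [map_mul, map_pow]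
    exact K.mul_mem hu (K.pow_mem hl 4)
  have h3 : 3 ∣ Nat.card K := by
    have h := orderOf_dvd_natCard (⟨prj (uu * ll ^ 4), hw⟩ : K)
    rwa [show orderOf (⟨prj (uu * ll ^ 4), hw⟩ : K) = 3 by
      rw [← orderOf_injective K.subtype (Subgroup.subtype_injective K)]
      exact orderOf_prj_w] at h
  have h21 : 21 ∣ Nat.card K := Nat.Coprime.mul_dvd_of_dvd_of_dvd (by norm_num) h3 h7
  have hcases : Nat.card K = 21 ∨ Nat.card K = 42 ∨ Nat.card K = 84 ∨ Nat.card K = 168 := by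
    have hle : Nat.card K ≤ 168 := Nat.le_of_dvd (by norm_num) hKdvd
    have key : ∀ m : ℕ, m < 169 → m ∣ 168 → 21 ∣ m →
        (m = 21 ∨ m = 42 ∨ m = 84 ∨ m = 168) := by decide
    exact key _ (by omega) hKdvd h21
  have hcontra : ¬ (Nat.card K = 21 ∨ Nat.card K = 42 ∨ Nat.card K = 84) := by
    rintro hc
    obtain ⟨Pu, hPu⟩ := sylow_of_orderOf_eq hKdvd _ hordu
    obtain ⟨Pl, hPl⟩ := sylow_of_orderOf_eq hKdvd _ hordl
    have hidx : (Pu : Subgroup K).index ∣ 12 := by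
      have hcardPu : Nat.card (Pu : Subgroup K) = 7 := by
        rw [hPu, Nat.card_zpowers, hordu]
      have hmul := Subgroup.card_mul_index (Pu : Subgroup K)
      rw [hcardPu] at hmul
      have : (Pu : Subgroup K).index = 3 ∨ (Pu : Subgroup K).index = 6 ∨
          (Pu : Subgroup K).index = 12 := by
        rcases hc with hc | hc | hc <;> rw [hc] at hmul <;> omega
      rcases this with h | h | h <;> rw [h] <;> norm_num
    have hdvd := (Sylow.card_dvd_index Pu).trans hidx
    have hmod : Nat.card (Sylow 7 K) % 7 = 1 := card_sylow_modEq_one 7 K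
    have h1 : Nat.card (Sylow 7 K) = 1 := by
      have hle : Nat.card (Sylow 7 K) ≤ 12 := Nat.le_of_dvd (by norm_num) hdvd
      interval_cases h : Nat.card (Sylow 7 K) <;> omega
    obtain ⟨hsub, -⟩ := Nat.card_eq_one_iff_unique.mp h1
    have hPuPl : Pu = Pl := hsub.elim Pu Pl
    apply prj_ll_not_mem
    have heq : Subgroup.zpowers (⟨prj uu, hu⟩ : K) = Subgroup.zpowers (⟨prj ll, hl⟩ : K) := by
      rw [← hPu, hPuPl, hPl]
    have hmap := congrArg (Subgroup.map K.subtype) heq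
    rw [MonoidHom.map_zpowers, MonoidHom.map_zpowers] at hmap
    show prj ll ∈ Subgroup.zpowers (prj uu)
    rw [show prj uu = K.subtype ⟨prj uu, hu⟩ from rfl, hmap]
    exact Subgroup.mem_zpowers _
  have hc168 : Nat.card K = 168 := by tauto
  apply Subgroup.eq_top_of_card_eq
  rw [hc168, card_PSL]
lemma card_PSL_dvd : Nat.card PSL27 ∣ 168 := by rw [card_PSL]

lemma card_sylow_of_7dvd {H : Subgroup PSL27} (h7 : 7 ∣ Nat.card H) (Q : Sylow 7 H) :
    Nat.card Q = 7 := by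
  have hHdvd : Nat.card H ∣ 168 := by
    have := Subgroup.card_subgroup_dvd_card H
    rwa [card_PSL] at this
  have hQH : Nat.card Q ∣ Nat.card H := Subgroup.card_subgroup_dvd_card (Q : Subgroup H)
  have hQ168 : Nat.card Q ∣ 168 := hQH.trans hHdvd
  have h7Q : 7 ∣ Nat.card Q := Q.dvd_card_of_dvd_card h7
  obtain ⟨n, hn⟩ := IsPGroup.iff_card.mp Q.isPGroup'
  rcases n with _ | _ | n
  · rw [hn] at h7Q; norm_num at h7Q
  · rw [hn, pow_one]
  · exfalso
    rw [hn] at hQ168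
    have : (49 : ℕ) ∣ 168 := dvd_trans ⟨7 ^ n, by ring⟩ hQ168
    norm_num at this

/-- If a subgroup of `PSL(2,7)` of order divisible by `7` has a unique Sylow `7`-subgroup,
then its order divides `21`. -/
lemma card_dvd_21 {H : Subgroup PSL27} (h7 : 7 ∣ Nat.card H)
    (hsub : Subsingleton (Sylow 7 ↥H)) : Nat.card H ∣ 21 := by
  obtain ⟨Q⟩ := Sylow.nonempty (p := 7) (G := ↥H)
  have hQnormal : (Q : Subgroup ↥H).Normal := by
    rw [← Subgroup.normalizer_eq_top_iff, eq_top_iff]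
    intro h _
    show h ∈ Subgroup.normalizer (Q : Set ↥H)
    rw [← Sylow.smul_eq_iff_mem_normalizer]
    exact hsub.elim _ _
  set P' : Subgroup PSL27 := (Q : Subgroup ↥H).map H.subtype with hP'def
  have hcardP' : Nat.card P' = 7 := by
    have e := Nat.card_congr (Subgroup.equivMapOfInjective (Q : Subgroup ↥H) H.subtype
      (Subgroup.subtype_injective H)).toEquiv
    rw [hP'def, ← e]
    exact card_sylow_of_7dvd h7 Q
  obtain ⟨PG, hPG⟩ := sylow_of_card7 card_PSL_dvd P' hcardP'
  have hle : H ≤ Subgroup.normalizer (P' : Set PSL27) := by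
    intro h hh
    rw [Subgroup.mem_normalizer_iff]
    intro x
    constructor
    · intro hx
      rw [hP'def, Subgroup.mem_map] at hx ⊢
      obtain ⟨q, hq, rfl⟩ := hx
      exact ⟨(⟨h, hh⟩ : ↥H) * q * (⟨h, hh⟩ : ↥H)⁻¹, hQnormal.conj_mem q hq _, rfl⟩
    · intro hx
      rw [hP'def, Subgroup.mem_map] at hx ⊢
      obtain ⟨q, hq, hqe⟩ := hx
      refine ⟨(⟨h, hh⟩ : ↥H)⁻¹ * q * ((⟨h, hh⟩ : ↥H)⁻¹)⁻¹,
        hQnormal.conj_mem q hq _, ?_⟩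
      have hthis : (H.subtype) q = h * x * h⁻¹ := hqe
      calc H.subtype ((⟨h, hh⟩ : ↥H)⁻¹ * q * ((⟨h, hh⟩ : ↥H)⁻¹)⁻¹)
          = h⁻¹ * H.subtype q * h := by rw [map_mul, map_mul, map_inv, inv_inv]; rfl
        _ = x := by rw [hthis]; group
  have hdvd : Nat.card H ∣ Nat.card (Subgroup.normalizer (P' : Set PSL27)) := Subgroup.card_dvd_of_le hle
  rwa [← hPG, card_normalizer PG] at hdvd

lemma not_card_stab (H : Subgroup PSL27)
    (hc : Nat.card H = 14 ∨ Nat.card H = 28 ∨ Nat.card H = 42 ∨ Nat.card H = 56 ∨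
      Nat.card H = 84) : False := by
  have h7 : 7 ∣ Nat.card H := by rcases hc with h|h|h|h|h <;> rw [h] <;> norm_num
  have hn21 : ¬ (Nat.card H ∣ 21) := by rcases hc with h|h|h|h|h <;> rw [h] <;> norm_num
  obtain ⟨Q⟩ := Sylow.nonempty (p := 7) (G := ↥H)
  have hcardQ : Nat.card Q = 7 := card_sylow_of_7dvd h7 Q
  have hmul := Subgroup.card_mul_index (Q : Subgroup ↥H)
  rw [hcardQ] at hmul
  have hmod : Nat.card (Sylow 7 ↥H) % 7 = 1 := card_sylow_modEq_one 7 ↥H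
  have hdvdidx := Sylow.card_dvd_index Q
  -- either a unique Sylow `7`-subgroup, or `Nat.card H = 56` with eight of them
  rcases hc with h|h|h|h|h
  -- cases 14, 28, 42, 84 : index ∈ {2,4,6,12}
  · rw [h] at hmul
    apply hn21 (card_dvd_21 h7 ?_)
    have : (Q : Subgroup ↥H).index = 2 := by omega
    rw [this] at hdvdidx
    have h1 : Nat.card (Sylow 7 ↥H) = 1 := by
      have := Nat.le_of_dvd (by norm_num) hdvdidx
      interval_cases hh : Nat.card (Sylow 7 ↥H) <;> omega
    exact (Nat.card_eq_one_iff_unique.mp h1).1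
  · rw [h] at hmul
    apply hn21 (card_dvd_21 h7 ?_)
    have : (Q : Subgroup ↥H).index = 4 := by omega
    rw [this] at hdvdidx
    have h1 : Nat.card (Sylow 7 ↥H) = 1 := by
      have := Nat.le_of_dvd (by norm_num) hdvdidx
      interval_cases hh : Nat.card (Sylow 7 ↥H) <;> omega
    exact (Nat.card_eq_one_iff_unique.mp h1).1
  · rw [h] at hmul
    apply hn21 (card_dvd_21 h7 ?_)
    have : (Q : Subgroup ↥H).index = 6 := by omega
    rw [this] at hdvdidx
    have h1 : Nat.card (Sylow 7 ↥H) = 1 := by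
      have := Nat.le_of_dvd (by norm_num) hdvdidx
      interval_cases hh : Nat.card (Sylow 7 ↥H) <;> omega
    exact (Nat.card_eq_one_iff_unique.mp h1).1
  · -- the order 56 case
    rw [h] at hmul
    have hidx : (Q : Subgroup ↥H).index = 8 := by omega
    rw [hidx] at hdvdidx
    have h18 : Nat.card (Sylow 7 ↥H) = 1 ∨ Nat.card (Sylow 7 ↥H) = 8 := by
      have := Nat.le_of_dvd (by norm_num) hdvdidx
      interval_cases hh : Nat.card (Sylow 7 ↥H) <;> omega
    rcases h18 with h1 | h8
    · exact hn21 (card_dvd_21 h7 (Nat.card_eq_one_iff_unique.mp h1).1)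
    · -- all eight Sylow 7-subgroups of `PSL27` lie inside `H`
      have hmapcard : ∀ Q' : Sylow 7 ↥H,
          Nat.card ((Q' : Subgroup ↥H).map H.subtype) = 7 := by
        intro Q'
        have e := Nat.card_congr (Subgroup.equivMapOfInjective (Q' : Subgroup ↥H) H.subtype
          (Subgroup.subtype_injective H)).toEquiv
        rw [← e]
        exact card_sylow_of_7dvd h7 Q'
      have hex : ∀ Q' : Sylow 7 ↥H, ∃ P : Sylow 7 PSL27,
          (P : Subgroup PSL27) = (Q' : Subgroup ↥H).map H.subtype :=
        fun Q' => sylow_of_card7 card_PSL_dvd _ (hmapcard Q')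
      choose f hf using hex
      have hinj : Function.Injective f := by
        intro Q1 Q2 hQ
        apply Sylow.ext
        have := congrArg (fun P : Sylow 7 PSL27 => (P : Subgroup PSL27)) hQ
        simp only [hf] at this
        exact Subgroup.map_injective (Subgroup.subtype_injective H) this
      have hbij : Function.Bijective f := by
        rw [Nat.bijective_iff_injective_and_card]
        exact ⟨hinj, by rw [h8, card_sylow7_PSL]⟩
      have hmem : ∀ g : PSL27, orderOf g = 7 → g ∈ H := by
        intro g hg
        obtain ⟨PG, hPG⟩ := sylow_of_orderOf_eq card_PSL_dvd g hg
        obtain ⟨Q', hQ'⟩ := hbij.2 PG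
        have : (Subgroup.zpowers g : Subgroup PSL27) ≤ H := by
          rw [← hPG, ← hQ', hf]
          exact Subgroup.map_subtype_le _
        exact this (Subgroup.mem_zpowers g)
      have htop : H = ⊤ :=
        eq_top_of_uu_ll_mem H (hmem _ orderOf_prj_uu) (hmem _ orderOf_prj_ll)
      rw [htop] at h
      have he : Nat.card (⊤ : Subgroup PSL27) = Nat.card PSL27 := Nat.card_congr
        Subgroup.topEquiv.toEquiv
      rw [he, card_PSL] at h
      norm_num at h
  · rw [h] at hmul
    apply hn21 (card_dvd_21 h7 ?_)
    have : (Q : Subgroup ↥H).index = 12 := by omega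
    rw [this] at hdvdidx
    have h1 : Nat.card (Sylow 7 ↥H) = 1 := by
      have := Nat.le_of_dvd (by norm_num) hdvdidx
      interval_cases hh : Nat.card (Sylow 7 ↥H) <;> omega
    exact (Nat.card_eq_one_iff_unique.mp h1).1
/-- If `PSL(2,7)` acts transitively on a finite set `Σ` with `|Σ| ≤ 41`, then
`|Σ| ∈ {1, 7, 8, 14, 21, 24, 28}`. -/
theorem card_of_transitive_PSL27_action (S : Type*) [MulAction PSL27 S] [Finite S]
    [Nonempty S] (htrans : MulAction.IsPretransitive PSL27 S) (hcard : Nat.card S ≤ 41) :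
    Nat.card S ∈ ({1, 7, 8, 14, 21, 24, 28} : Set ℕ) := by
  obtain ⟨s⟩ := (inferInstance : Nonempty S)
  set H : Subgroup PSL27 := MulAction.stabilizer PSL27 s with hHdef
  have hidx : H.index = Nat.card S := by
    rw [hHdef, MulAction.index_stabilizer, MulAction.orbit_eq_univ, Set.ncard_univ]
  have hdvd : Nat.card S ∣ 168 := by
    rw [← hidx]
    have := Subgroup.index_dvd_card H
    rwa [card_PSL] at this
  have hpos : 1 ≤ Nat.card S := Nat.card_pos
  have key : ∀ m : ℕ, m < 42 → m ∣ 168 →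
      (m = 1 ∨ m = 2 ∨ m = 3 ∨ m = 4 ∨ m = 6 ∨ m = 7 ∨ m = 8 ∨ m = 12 ∨ m = 14 ∨
        m = 21 ∨ m = 24 ∨ m = 28) := by decide
  have hmulH := Subgroup.card_mul_index H
  rw [card_PSL, hidx] at hmulH
  simp only [Set.mem_insert_iff, Set.mem_singleton_iff]
  rcases key _ (by omega) hdvd with h|h|h|h|h|h|h|h|h|h|h|h
  all_goals rw [h] at hmulH ⊢
  all_goals first
    | omega
    | exact (not_card_stab H (by omega)).elim
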